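/- Let D be a linearly connected digraph with exactly two strong components D_1 and D_2, both nontrivial, and suppose the sequence {C(D^m)}_{m≥1} converges to a graph G. Then every connected component of G is a complete graph (i.e., any two distinct vertices lying in the same connected component of G are adjacent in G) if and only if κ_2 divides κ_1 and, for all (i, j), (i', j') ∈ I(D_{1,2}), one has red(i) − j = red(i') − j' in ZMod κ_2, where red denotes the natural reduction homomorphism ZMod κ_1 → ZMod κ_2 (well defined since κ_2 divides κ_1). -/

import Mathlib

/-- A digraph: a finite vertex type with an irreflexive arc relation (no loops). -/
structure Digraph' (V : Type*) where
  Adj : V → V → Prop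
  irrefl : ∀ v, ¬ Adj v v

namespace Digraph'

variable {V : Type*}

/-- There is a directed walk of length `m` from `x` to `y` in `D`;
i.e. `y` is an `m`-step prey of `x`. -/
def HasWalk (D : Digraph' V) (m : ℕ) (x y : V) : Prop :=
  ∃ f : ℕ → V, f 0 = x ∧ f m = y ∧ ∀ t, t < m → D.Adj (f t) (f (t + 1))

/-- There is a directed walk of length `m` from `x` to `y` staying inside `S`. -/
def HasWalkIn (D : Digraph' V) (S : Set V) (m : ℕ) (x y : V) : Prop :=
  ∃ f : ℕ → V, f 0 = x ∧ f m = y ∧ (∀ t, t ≤ m → f t ∈ S) ∧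
    ∀ t, t < m → D.Adj (f t) (f (t + 1))

/-- The `m`-step competition graph `C(D^m)` of `D`. -/
def compGraph (D : Digraph' V) (m : ℕ) : SimpleGraph V where
  Adj u v := u ≠ v ∧ ∃ z, D.HasWalk m u z ∧ D.HasWalk m v z
  symm := by
    constructor
    rintro u v ⟨hne, z, h1, h2⟩
    exact ⟨hne.symm, z, h2, h1⟩
  loopless := ⟨fun v h => h.1 rfl⟩

/-- The sequence `{C(D^m)}_{m ≥ 1}` converges. -/
def CompConverges (D : Digraph' V) : Prop :=
  ∃ N : ℕ, 1 ≤ N ∧ ∀ m, N ≤ m → D.compGraph m = D.compGraph N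

/-- The sequence `{C(D^m)}_{m ≥ 1}` converges to the graph `G`. -/
def CompConvergesTo (D : Digraph' V) (G : SimpleGraph V) : Prop :=
  ∃ N : ℕ, 1 ≤ N ∧ ∀ m, N ≤ m → D.compGraph m = G

/-- `D` is linearly connected with strong components `Vset 1, …, Vset η`. -/
structure IsLinConn (D : Digraph' V) (η : ℕ) (Vset : ℕ → Set V) : Prop where
  nonempty : ∀ i, 1 ≤ i → i ≤ η → (Vset i).Nonempty
  cover : ∀ v : V, ∃ i, 1 ≤ i ∧ i ≤ η ∧ v ∈ Vset i
  disjoint' : ∀ i j, 1 ≤ i → i ≤ η → 1 ≤ j → j ≤ η →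
      ∀ v : V, v ∈ Vset i → v ∈ Vset j → i = j
  strong : ∀ i, 1 ≤ i → i ≤ η → ∀ x ∈ Vset i, ∀ y ∈ Vset i,
      ∃ m, D.HasWalkIn (Vset i) m x y
  arcs : ∀ x y : V, D.Adj x y → ∃ i, 1 ≤ i ∧
      ((i ≤ η ∧ x ∈ Vset i ∧ y ∈ Vset i) ∨
       (i + 1 ≤ η ∧ x ∈ Vset i ∧ y ∈ Vset (i + 1)))
  linked : ∀ i, 1 ≤ i → i + 1 ≤ η → ∃ x ∈ Vset i, ∃ y ∈ Vset (i + 1), D.Adj x y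

/-- A component with vertex set `S` is trivial if `S` is a singleton. -/
def IsTrivialComp (S : Set V) : Prop := ∃ v : V, S = {v}

/-- `κ` is the index of imprimitivity of the (strong) component with vertex set `S`:
the gcd of the lengths of all closed directed walks inside `S`. -/
def IsImprimIndex (D : Digraph' V) (S : Set V) (κ : ℕ) : Prop :=
  (∀ (x : V) (m : ℕ), x ∈ S → 0 < m → D.HasWalkIn S m x x → κ ∣ m) ∧
  ∀ d : ℕ, (∀ (x : V) (m : ℕ), x ∈ S → 0 < m → D.HasWalkIn S m x x → d ∣ m) → d ∣ κ

/-- `u` is an imprimitivity labelling on `S`: along any arc inside `S` the label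
increases by one.  Its fibers are the sets of imprimitivity. -/
def IsImprimLabelling (D : Digraph' V) (S : Set V) {κ : ℕ} (u : V → ZMod κ) : Prop :=
  ∀ x ∈ S, ∀ y ∈ S, D.Adj x y → u y = u x + 1

/-- `(k, l) ∈ I(D_{p,p+1})`: some arc goes from a vertex of `U_k^{(p)}` to a vertex of
`U_l^{(p+1)}`. -/
def InI (D : Digraph' V) (Vset : ℕ → Set V) {κ : ℕ → ℕ}
    (u : ∀ i : ℕ, V → ZMod (κ i)) (p : ℕ) (k : ZMod (κ p)) (l : ZMod (κ (p + 1))) : Prop :=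
  ∃ x ∈ Vset p, ∃ y ∈ Vset (p + 1), D.Adj x y ∧ u p x = k ∧ u (p + 1) y = l

/-- `(i, j)` is an edge of the bipartite graph `B_{p,p+1}`. -/
def BAdj (D : Digraph' V) (Vset : ℕ → Set V) {κ : ℕ → ℕ}
    (u : ∀ i : ℕ, V → ZMod (κ i)) (p : ℕ) (i : ZMod (κ p)) (j : ZMod (κ (p + 1))) : Prop :=
  ∃ (k : ZMod (κ p)) (l : ZMod (κ (p + 1))) (a : ℤ),
    InI D Vset u p k l ∧ i = k + 1 + (a : ZMod (κ p)) ∧ j = l + (a : ZMod (κ (p + 1)))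

/-- The competition skeleton graph (CS-graph) `PT_D^{(η)}`: vertices are pairs `⟨r, i⟩`
with `i ∈ ZMod (κ r)` (only `1 ≤ r ≤ η` carries edges); `⟨p, i⟩` and `⟨p+1, j⟩` are
adjacent exactly when `i` and `j` are adjacent in `B_{p,p+1}`. -/
def csGraph (D : Digraph' V) (Vset : ℕ → Set V) {κ : ℕ → ℕ}
    (u : ∀ i : ℕ, V → ZMod (κ i)) (η : ℕ) : SimpleGraph ((r : ℕ) × ZMod (κ r)) where
  Adj a b := ∃ p, 1 ≤ p ∧ p + 1 ≤ η ∧ ∃ (i : ZMod (κ p)) (j : ZMod (κ (p + 1))),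
    BAdj D Vset u p i j ∧
    ((a = ⟨p, i⟩ ∧ b = ⟨p + 1, j⟩) ∨ (a = ⟨p + 1, j⟩ ∧ b = ⟨p, i⟩))
  symm := by
    constructor
    rintro a b ⟨p, h1, h2, i, j, hB, hab⟩
    exact ⟨p, h1, h2, i, j, hB,
      hab.elim (fun h => Or.inr ⟨h.2, h.1⟩) (fun h => Or.inl ⟨h.2, h.1⟩)⟩
  loopless := by
    constructor
    rintro a ⟨p, _, _, i, j, _, hab⟩
    rcases hab with ⟨ha, hb⟩ | ⟨ha, hb⟩
    · have h : p = p + 1 := congrArg Sigma.fst (ha.symm.trans hb)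
      omega
    · have h : p + 1 = p := congrArg Sigma.fst (ha.symm.trans hb)
      omega

end Digraph'


namespace Digraph'

variable {V : Type*}

variable {D : Digraph' V} {S T : Set V}

lemma HasWalkIn.hasWalk {m : ℕ} {x y : V} (h : D.HasWalkIn S m x y) : D.HasWalk m x y := by
  obtain ⟨f, h0, h1, _, h3⟩ := h; exact ⟨f, h0, h1, h3⟩

lemma hasWalkIn_zero {x : V} (hx : x ∈ S) : D.HasWalkIn S 0 x x :=
  ⟨fun _ => x, rfl, rfl, fun _ _ => hx, fun t ht => absurd ht (Nat.not_lt_zero t)⟩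

lemma eq_of_walkIn_zero {x y : V} (h : D.HasWalkIn S 0 x y) : x = y := by
  obtain ⟨f, h0, h1, -, -⟩ := h; rw [← h0, h1]

lemma end_mem {m : ℕ} {x y : V} (h : D.HasWalkIn S m x y) : y ∈ S := by
  obtain ⟨f, h0, h1, hS, -⟩ := h
  rw [← h1]
  exact hS m le_rfl

lemma hasWalkIn_one {x y : V} (hx : x ∈ S) (hy : y ∈ S) (h : D.Adj x y) :
    D.HasWalkIn S 1 x y := by
  refine ⟨fun t => if t = 0 then x else y, by simp, by simp, ?_, ?_⟩
  · intro t ht; by_cases h0 : t = 0 <;> simp [h0, hx, hy]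
  · intro t ht; interval_cases t; simpa using h

lemma HasWalkIn.trans {m n : ℕ} {x y z : V} (h1 : D.HasWalkIn S m x y)
    (h2 : D.HasWalkIn S n y z) : D.HasWalkIn S (m + n) x z := by
  obtain ⟨f, hf0, hfm, hfS, hfA⟩ := h1
  obtain ⟨g, hg0, hgn, hgS, hgA⟩ := h2
  refine ⟨fun t => if t < m then f t else g (t - m), ?_, ?_, ?_, ?_⟩
  · by_cases hm : 0 < m
    · simp [hm, hf0]
    · have hm0 : m = 0 := by omega
      subst hm0
      simpa using hg0.trans ((hf0 ▸ hfm).symm)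
  · have : ¬ (m + n < m) := by omega
    simp only [this, if_false, Nat.add_sub_cancel_left, hgn]
  · intro t ht
    by_cases htm : t < m
    · simp only [htm, if_true]; exact hfS t (le_of_lt htm)
    · simp only [htm, if_false]; exact hgS (t - m) (by omega)
  · intro t ht
    by_cases h1 : t + 1 < m
    · have h2 : t < m := by omega
      simp only [h1, h2, if_true]; exact hfA t h2
    · by_cases h2 : t < m
      · have hm : t + 1 = m := by omega
        simp only [h2, h1, if_true, if_false]
        have ht1 : t + 1 - m = 0 := by omega
        rw [ht1, hg0]
        have := hfA t h2
        rwa [hm, hfm] at this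
      · have h3 : t + 1 - m = t - m + 1 := by omega
        simp only [h1, h2, if_false, h3]
        exact hgA (t - m) (by omega)

lemma HasWalk.trans {m n : ℕ} {x y z : V} (h1 : D.HasWalk m x y)
    (h2 : D.HasWalk n y z) : D.HasWalk (m + n) x z := by
  obtain ⟨f, hf0, hfm, hfA⟩ := h1
  obtain ⟨g, hg0, hgn, hgA⟩ := h2
  have w1 : D.HasWalkIn Set.univ m x y := ⟨f, hf0, hfm, fun _ _ => trivial, hfA⟩
  have w2 : D.HasWalkIn Set.univ n y z := ⟨g, hg0, hgn, fun _ _ => trivial, hgA⟩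
  exact (w1.trans w2).hasWalk

lemma level_of_walkIn {κ : ℕ} {u : V → ZMod κ} (hu : D.IsImprimLabelling S u) :
    ∀ {m : ℕ} {x y : V}, D.HasWalkIn S m x y → u y = u x + m := by
  intro m
  induction m with
  | zero => intro x y h; rw [← eq_of_walkIn_zero h]; simp
  | succ m ih =>
    rintro x y ⟨f, h0, h1, hS, hA⟩
    have hw : D.HasWalkIn S m x (f m) :=
      ⟨f, h0, rfl, fun t ht => hS t (by omega), fun t ht => hA t (by omega)⟩
    have hstep := hu (f m) (hS m (by omega)) (f (m + 1)) (hS (m + 1) le_rfl) (hA m (by omega))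
    rw [← h1, hstep, ih hw]
    push_cast
    ring

private lemma mul_mem_of {A : Set ℕ} (h0 : 0 ∈ A)
    (hadd : ∀ a ∈ A, ∀ b ∈ A, a + b ∈ A) {b : ℕ} (hb : b ∈ A) : ∀ k, k * b ∈ A := by
  intro k; induction k with
  | zero => simpa
  | succ k ih => simpa [Nat.succ_mul] using hadd _ ih _ hb

lemma frobenius_aux {A : Set ℕ} (h0 : 0 ∈ A) (hadd : ∀ a ∈ A, ∀ b ∈ A, a + b ∈ A)
    {s κ a b : ℕ} (hs : s ∈ A) (hspos : 0 < s) (hκdvd : ∀ n ∈ A, κ ∣ n)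
    (ha : a ∈ A) (hb : b ∈ A) (hab : a = κ + b) :
    ∀ m, κ ∣ m → s * (a + s * b) ≤ m → m ∈ A := by
  intro m hκm hm
  have hκs : κ ∣ s := hκdvd s hs
  have hκpos : 0 < κ := by
    rcases Nat.eq_zero_or_pos κ with h | h
    · exfalso; rw [h] at hκs; have := Nat.eq_zero_of_zero_dvd hκs; omega
    · exact h
  -- e := κ + s * b is in A
  have hsb : b ≤ s * b := Nat.le_mul_of_pos_left b hspos
  have heA : κ + s * b ∈ A := by
    have h1 : a + (s - 1) * b ∈ A := hadd _ ha _ (mul_mem_of h0 hadd hb (s - 1))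
    have h2 : a + (s - 1) * b = κ + s * b := by
      rw [hab, Nat.sub_one_mul]; omega
    rwa [h2] at h1
  set e := κ + s * b with he
  set K := m / κ with hK
  set d := s / κ with hd
  set k := K % d with hk
  have hdpos : 0 < d := Nat.div_pos (Nat.le_of_dvd hspos hκs) hκpos
  have hkd : k < d := Nat.mod_lt _ hdpos
  have hmK : m = K * κ := (Nat.div_mul_cancel hκm).symm
  have hsd : s = d * κ := (Nat.div_mul_cancel hκs).symm
  set X := K / d with hX
  have hKdX : K = d * X + k := (Nat.div_add_mod K d).symm
  -- m = s * X + k * κ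
  have hm2 : m = s * X + k * κ := by rw [hmK, hKdX, hsd]; ring
  -- X ≥ k * b
  have hXkb : k * b ≤ X := by
    have h1 : s * (k * b) ≤ s * (s * b) := by
      have : k ≤ s := le_of_lt (lt_of_lt_of_le hkd (Nat.div_le_self _ _))
      exact Nat.mul_le_mul_left _ (Nat.mul_le_mul_right _ this)
    have hks : k * κ ≤ (d - 1) * κ := Nat.mul_le_mul_right _ (by omega)
    have hdk : (d - 1) * κ + κ = s := by
      have hκd : κ ≤ d * κ := Nat.le_mul_of_pos_left κ hdpos
      rw [hsd, Nat.sub_one_mul]; omega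
    have h2 : s * X + s ≥ s * (a + s * b) := by omega
    have h3 : s * (a + s * b) = s * a + s * (s * b) := by ring
    have h4 : s ≤ s * a := Nat.le_mul_of_pos_right s (by omega)
    have h5 : s * (k * b) ≤ s * X := by omega
    exact Nat.le_of_mul_le_mul_left h5 hspos
  -- m = k * e + (X - k * b) * s
  have hfinal : m = k * e + (X - k * b) * s := by
    zify [hXkb]
    have he' : (e : ℤ) = κ + s * b := by rw [he]; push_cast; ring
    have hm2' : (m : ℤ) = s * X + k * κ := by rw [hm2]; push_cast; ring
    linear_combination (-(k : ℤ)) * he' + hm2'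
  rw [hfinal]
  exact hadd _ (mul_mem_of h0 hadd heA k) _ (mul_mem_of h0 hadd hs (X - k * b))

lemma exists_diff {A : Set ℕ} (h0 : 0 ∈ A) (hadd : ∀ a ∈ A, ∀ b ∈ A, a + b ∈ A)
    {κ : ℤ} (hκ : κ ∈ AddSubgroup.closure ((Nat.cast : ℕ → ℤ) '' A)) :
    ∃ a ∈ A, ∃ b ∈ A, (a : ℤ) - b = κ := by
  let H : AddSubgroup ℤ :=
    { carrier := {x | ∃ a ∈ A, ∃ b ∈ A, (a : ℤ) - b = x}
      zero_mem' := ⟨0, h0, 0, h0, by simp⟩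
      add_mem' := by
        rintro x y ⟨a, ha, b, hb, rfl⟩ ⟨c, hc, e, he', rfl⟩
        exact ⟨a + c, hadd _ ha _ hc, b + e, hadd _ hb _ he', by push_cast; ring⟩
      neg_mem' := by
        rintro x ⟨a, ha, b, hb, rfl⟩
        exact ⟨b, hb, a, ha, by ring⟩ }
  have hle : AddSubgroup.closure ((Nat.cast : ℕ → ℤ) '' A) ≤ H := by
    rw [AddSubgroup.closure_le]
    rintro - ⟨n, hn, rfl⟩
    exact ⟨n, hn, 0, h0, by simp⟩
  exact hle hκ


lemma nontrivial_mem {S : Set V} (hnt : ¬ IsTrivialComp S) {x : V} (hx : x ∈ S) :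
    ∃ y ∈ S, y ≠ x := by
  by_contra h
  push_neg at h
  exact hnt ⟨x, Set.eq_singleton_iff_unique_mem.mpr ⟨hx, fun y hy => h y hy⟩⟩

lemma eventual_walkIn [Fintype V] (D : Digraph' V) (S : Set V)
    (hnt : ¬ IsTrivialComp S) (hne : S.Nonempty)
    (hstrong : ∀ x ∈ S, ∀ y ∈ S, ∃ m, D.HasWalkIn S m x y)
    {κ : ℕ} (hκ : D.IsImprimIndex S κ) {u : V → ZMod κ} (hu : D.IsImprimLabelling S u) :
    0 < κ ∧ ∃ M, ∀ x ∈ S, ∀ y ∈ S, ∀ m : ℕ, M ≤ m → (m : ZMod κ) = u y - u x →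
      D.HasWalkIn S m x y := by
  classical
  obtain ⟨x0, hx0⟩ := hne
  set A : Set ℕ := {m | D.HasWalkIn S m x0 x0} with hA
  have h0A : 0 ∈ A := hasWalkIn_zero hx0
  have haddA : ∀ a ∈ A, ∀ b ∈ A, a + b ∈ A := fun a ha b hb => HasWalkIn.trans ha hb
  -- a positive element of A
  obtain ⟨y0, hy0, hy0x⟩ := nontrivial_mem hnt hx0
  obtain ⟨p0, hp0⟩ := hstrong x0 hx0 y0 hy0
  obtain ⟨q0, hq0⟩ := hstrong y0 hy0 x0 hx0
  have hp0pos : 0 < p0 := by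
    rcases Nat.eq_zero_or_pos p0 with h | h
    · exact absurd (eq_of_walkIn_zero (h ▸ hp0)).symm hy0x
    · exact h
  set s := p0 + q0 with hs
  have hsA : s ∈ A := hp0.trans hq0
  have hspos : 0 < s := by omega
  have hκdvdA : ∀ n ∈ A, κ ∣ n := by
    intro n hn
    rcases Nat.eq_zero_or_pos n with h | h
    · simp [h]
    · exact hκ.1 x0 n hx0 h hn
  have hκpos : 0 < κ := by
    have hd := hκdvdA s hsA
    rcases Nat.eq_zero_or_pos κ with h | h
    · rw [h] at hd; have := Nat.eq_zero_of_zero_dvd hd; omega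
    · exact h
  haveI : NeZero κ := ⟨hκpos.ne'⟩
  -- κ is in the subgroup generated by A
  have hκmem : (κ : ℤ) ∈ AddSubgroup.closure ((Nat.cast : ℕ → ℤ) '' A) := by
    obtain ⟨g, hg⟩ := Int.subgroup_cyclic (AddSubgroup.closure ((Nat.cast : ℕ → ℤ) '' A))
    have hAg : ∀ n ∈ A, (g ∣ (n : ℤ)) := by
      intro n hn
      have : (n : ℤ) ∈ AddSubgroup.closure ((Nat.cast : ℕ → ℤ) '' A) :=
        AddSubgroup.subset_closure ⟨n, hn, rfl⟩
      rw [hg, AddSubgroup.mem_closure_singleton] at this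
      obtain ⟨c, hc⟩ := this
      exact ⟨c, by rw [← hc, zsmul_eq_mul]; push_cast; ring⟩
    have hdall : ∀ (x : V) (m : ℕ), x ∈ S → 0 < m → D.HasWalkIn S m x x → g.natAbs ∣ m := by
      intro x m hx hm hw
      obtain ⟨p, hp⟩ := hstrong x0 hx0 x hx
      obtain ⟨q, hq⟩ := hstrong x hx x0 hx0
      have h1 : p + q ∈ A := hp.trans hq
      have h2 : p + (m + q) ∈ A := hp.trans (hw.trans hq)
      have hgm : g ∣ (m : ℤ) := by
        have := dvd_sub (hAg _ h2) (hAg _ h1)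
        have heq : ((p + (m + q) : ℕ) : ℤ) - ((p + q : ℕ) : ℤ) = (m : ℤ) := by
          push_cast; ring
        rwa [heq] at this
      have := Int.natAbs_dvd_natAbs.mpr hgm
      simpa using this
    have hgκ : g.natAbs ∣ κ := hκ.2 g.natAbs hdall
    have hgκ' : g ∣ (κ : ℤ) := Int.natAbs_dvd.mp (Int.natCast_dvd_natCast.mpr hgκ)
    rw [hg, AddSubgroup.mem_closure_singleton]
    obtain ⟨c, hc⟩ := hgκ'
    exact ⟨c, by rw [zsmul_eq_mul, hc]; push_cast; ring⟩
  obtain ⟨a, ha, b, hb, hab⟩ := exists_diff h0A haddA hκmem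
  have hab' : a = κ + b := by omega
  set F := s * (a + s * b) with hF
  have hfrob : ∀ m, κ ∣ m → F ≤ m → m ∈ A :=
    frobenius_aux h0A haddA hsA hspos hκdvdA ha hb hab'
  refine ⟨hκpos, ?_⟩
  have perpair : ∀ xy : V × V, ∃ Mxy, ∀ m : ℕ, Mxy ≤ m → xy.1 ∈ S → xy.2 ∈ S →
      (m : ZMod κ) = u xy.2 - u xy.1 → D.HasWalkIn S m xy.1 xy.2 := by
    rintro ⟨x, y⟩
    by_cases hxy : x ∈ S ∧ y ∈ S
    · obtain ⟨p, hp⟩ := hstrong x hxy.1 x0 hx0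
      obtain ⟨q, hq⟩ := hstrong x0 hx0 y hxy.2
      refine ⟨p + q + F, fun m hm _ _ hcast => ?_⟩
      set c := m - (p + q) with hc
      have hcF : F ≤ c := by omega
      have hlev1 : u x0 = u x + (p : ZMod κ) := level_of_walkIn hu hp
      have hlev2 : u y = u x0 + (q : ZMod κ) := level_of_walkIn hu hq
      have hccast : ((c : ℕ) : ZMod κ) = 0 := by
        have hle : p + q ≤ m := by omega
        rw [hc, Nat.cast_sub hle, hcast, hlev2, hlev1]
        push_cast
        ring
      have hcdvd : κ ∣ c := (ZMod.natCast_eq_zero_iff c κ).mp hccast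
      have hcA : c ∈ A := hfrob c hcdvd hcF
      have hw : D.HasWalkIn S (p + c + q) x y := (hp.trans hcA).trans hq
      have : p + c + q = m := by omega
      rwa [this] at hw
    · exact ⟨0, fun m _ h1 h2 _ => absurd ⟨h1, h2⟩ hxy⟩
  choose g hg using perpair
  refine ⟨Finset.univ.sup g, fun x hx y hy m hm hcast => ?_⟩
  exact hg (x, y) m (le_trans (Finset.le_sup (Finset.mem_univ (x, y))) hm) hx hy hcast

lemma out_step {S : Set V} (hnt : ¬ IsTrivialComp S)
    (hstrong : ∀ x ∈ S, ∀ y ∈ S, ∃ m, D.HasWalkIn S m x y)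
    {x : V} (hx : x ∈ S) : ∃ y ∈ S, D.Adj x y := by
  obtain ⟨y0, hy0, hy0x⟩ := nontrivial_mem hnt hx
  obtain ⟨m, f, h0, h1, hS, hA⟩ := hstrong x hx y0 hy0
  have hm : 0 < m := by
    rcases Nat.eq_zero_or_pos m with h | h
    · exact absurd (show x = y0 by subst h; rw [← h0, h1]) hy0x.symm
    · exact h
  exact ⟨f 1, hS 1 hm, h0 ▸ hA 0 hm⟩

lemma walk_any_length {S : Set V} (hnt : ¬ IsTrivialComp S)
    (hstrong : ∀ x ∈ S, ∀ y ∈ S, ∃ m, D.HasWalkIn S m x y) :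
    ∀ (t : ℕ) {x : V}, x ∈ S → ∃ z ∈ S, D.HasWalkIn S t x z := by
  intro t
  induction t with
  | zero => exact fun {x} hx => ⟨x, hx, hasWalkIn_zero hx⟩
  | succ t ih =>
    intro x hx
    obtain ⟨z, hz, hw⟩ := ih hx
    obtain ⟨z', hz', hadj⟩ := out_step hnt hstrong hz
    exact ⟨z', hz', hw.trans (hasWalkIn_one hz hz' hadj)⟩

lemma fiber_nonempty {S : Set V} (hnt : ¬ IsTrivialComp S)
    (hstrong : ∀ x ∈ S, ∀ y ∈ S, ∃ m, D.HasWalkIn S m x y)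
    {κ : ℕ} [NeZero κ] {u : V → ZMod κ} (hu : D.IsImprimLabelling S u)
    {x : V} (hx : x ∈ S) : ∀ c : ZMod κ, ∃ z ∈ S, u z = c := by
  intro c
  obtain ⟨z, hz, hw⟩ := walk_any_length hnt hstrong ((c - u x).val) hx
  refine ⟨z, hz, ?_⟩
  rw [level_of_walkIn hu hw, ZMod.natCast_rightInverse (c - u x)]
  ring


section TwoComp

variable {D : Digraph' V} {Vset : ℕ → Set V}

lemma mem_cases (hD : D.IsLinConn 2 Vset) (v : V) : v ∈ Vset 1 ∨ v ∈ Vset 2 := by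
  obtain ⟨i, hi1, hi2, hv⟩ := hD.cover v
  interval_cases i
  · exact Or.inl hv
  · exact Or.inr hv

lemma not_mem_both (hD : D.IsLinConn 2 Vset) {v : V} (hv1 : v ∈ Vset 1) (hv2 : v ∈ Vset 2) :
    False := by
  have := hD.disjoint' 1 2 le_rfl one_le_two one_le_two le_rfl v hv1 hv2
  omega

lemma arc_cases (hD : D.IsLinConn 2 Vset) {p q : V} (h : D.Adj p q) :
    (p ∈ Vset 1 ∧ q ∈ Vset 1) ∨ (p ∈ Vset 2 ∧ q ∈ Vset 2) ∨ (p ∈ Vset 1 ∧ q ∈ Vset 2) := by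
  obtain ⟨i, hi1, hcase⟩ := hD.arcs p q h
  rcases hcase with ⟨hi2, hp, hq⟩ | ⟨hi2, hp, hq⟩
  · interval_cases i
    · exact Or.inl ⟨hp, hq⟩
    · exact Or.inr (Or.inl ⟨hp, hq⟩)
  · have hi : i = 1 := by omega
    subst hi
    exact Or.inr (Or.inr ⟨hp, hq⟩)

lemma absorb (hD : D.IsLinConn 2 Vset) {p q : V} (hp : p ∈ Vset 2) (h : D.Adj p q) :
    q ∈ Vset 2 := by
  rcases arc_cases hD h with ⟨h1, -⟩ | ⟨-, h2⟩ | ⟨h1, -⟩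
  · exact absurd hp (fun hp' => not_mem_both hD h1 hp')
  · exact h2
  · exact absurd hp (fun hp' => not_mem_both hD h1 hp')

lemma walk_in_two (hD : D.IsLinConn 2 Vset) {m : ℕ} {x z : V} (hx : x ∈ Vset 2)
    (h : D.HasWalk m x z) : D.HasWalkIn (Vset 2) m x z := by
  obtain ⟨f, h0, h1, hA⟩ := h
  have hmem : ∀ t, t ≤ m → f t ∈ Vset 2 := by
    intro t
    induction t with
    | zero => intro _; rw [h0]; exact hx
    | succ t ih => intro ht; exact absorb hD (ih (by omega)) (hA t (by omega))
  exact ⟨f, h0, h1, hmem, hA⟩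

lemma walk_stay_one (hD : D.IsLinConn 2 Vset) {m : ℕ} {x z : V} (hx : x ∈ Vset 1)
    (hz : z ∈ Vset 1) (h : D.HasWalk m x z) : D.HasWalkIn (Vset 1) m x z := by
  obtain ⟨f, h0, h1, hA⟩ := h
  have hmem : ∀ t, t ≤ m → f t ∈ Vset 1 := by
    intro t ht
    rcases mem_cases hD (f t) with h' | h'
    · exact h'
    · exfalso
      have hforward : ∀ s, t + s ≤ m → f (t + s) ∈ Vset 2 := by
        intro s
        induction s with
        | zero => intro _; exact h'
        | succ s ih => intro hs; exact absorb hD (ih (by omega)) (hA (t + s) (by omega))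
      have := hforward (m - t) (by omega)
      rw [show t + (m - t) = m by omega, h1] at this
      exact not_mem_both hD hz this
  exact ⟨f, h0, h1, hmem, hA⟩

lemma walk_from_one (hD : D.IsLinConn 2 Vset) {m : ℕ} {x z : V} (hx : x ∈ Vset 1)
    (hz : z ∈ Vset 2) (h : D.HasWalk m x z) :
    ∃ t < m, ∃ p q, p ∈ Vset 1 ∧ q ∈ Vset 2 ∧ D.Adj p q ∧
      D.HasWalkIn (Vset 1) t x p ∧ D.HasWalkIn (Vset 2) (m - t - 1) q z := by
  classical
  obtain ⟨f, h0, h1, hA⟩ := h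
  have hPm : f m ∈ Vset 2 := by rw [h1]; exact hz
  have hex : ∃ t, f t ∈ Vset 2 := ⟨m, hPm⟩
  set t1 := Nat.find hex with ht1def
  have ht1m : t1 ≤ m := Nat.find_min' hex hPm
  have hft1 : f t1 ∈ Vset 2 := Nat.find_spec hex
  have hmin : ∀ i, i < t1 → f i ∉ Vset 2 := fun i hi => Nat.find_min hex hi
  have ht1pos : 0 < t1 := by
    rcases Nat.eq_zero_or_pos t1 with h' | h'
    · exfalso
      rw [h'] at hft1
      rw [h0] at hft1
      exact not_mem_both hD hx hft1
    · exact h'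
  set t := t1 - 1 with htdef
  have hpre : ∀ i, i ≤ t → f i ∈ Vset 1 := by
    intro i hi
    rcases mem_cases hD (f i) with h' | h'
    · exact h'
    · exact absurd h' (hmin i (by omega))
  have piece1 : D.HasWalkIn (Vset 1) t x (f t) :=
    ⟨f, h0, rfl, hpre, fun i hi => hA i (by omega)⟩
  have ht1t : t + 1 = t1 := by omega
  have harc : D.Adj (f t) (f t1) := by
    have := hA t (by omega)
    rwa [ht1t] at this
  have piece2 : D.HasWalkIn (Vset 2) (m - t - 1) (f t1) z := by
    have hwalk : D.HasWalk (m - t1) (f t1) z := by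
      refine ⟨fun s => f (t1 + s), by simp, ?_, ?_⟩
      · show f (t1 + (m - t1)) = z
        rw [show t1 + (m - t1) = m by omega, h1]
      · intro s hs
        exact hA (t1 + s) (by omega)
    have := walk_in_two hD hft1 hwalk
    rwa [← show m - t - 1 = m - t1 by omega] at this
  exact ⟨t, by omega, f t, f t1, hpre t le_rfl, hft1, harc, piece1, piece2⟩

end TwoComp

end Digraph'

open Digraph' in
/-- for two nontrivial strong components, the limit of `{C(D^m)}` has
only complete connected components iff `κ₂ ∣ κ₁` and `red(i) − j` is constant over
`I(D_{1,2})` mod `κ₂`. -/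
theorem stmt15 {V : Type*} [Fintype V] (D : Digraph' V) (Vset : ℕ → Set V)
    (hD : D.IsLinConn 2 Vset)
    (h1 : ¬ IsTrivialComp (Vset 1)) (h2 : ¬ IsTrivialComp (Vset 2))
    (κ : ℕ → ℕ) (u : ∀ i : ℕ, V → ZMod (κ i))
    (hκ : ∀ i, 1 ≤ i → i ≤ 2 → IsImprimIndex D (Vset i) (κ i))
    (hu : ∀ i, 1 ≤ i → i ≤ 2 → IsImprimLabelling D (Vset i) (u i))
    (G : SimpleGraph V) (hG : D.CompConvergesTo G) :
    (∀ x y : V, x ≠ y → G.Reachable x y → G.Adj x y) ↔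
    (κ 2 ∣ κ 1 ∧
      ∀ (i : ZMod (κ 1)) (j : ZMod (κ 2)) (i' : ZMod (κ 1)) (j' : ZMod (κ 2)),
        InI D Vset u 1 i j → InI D Vset u 1 i' j' →
        (i.val : ZMod (κ 2)) - j = (i'.val : ZMod (κ 2)) - j') := by
  classical
  obtain ⟨N, hN1, hN⟩ := hG
  have hne1 : (Vset 1).Nonempty := hD.nonempty 1 le_rfl one_le_two
  have hne2 : (Vset 2).Nonempty := hD.nonempty 2 one_le_two le_rfl
  have hstrong1 := hD.strong 1 le_rfl one_le_two
  have hstrong2 := hD.strong 2 one_le_two le_rfl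
  have hu1 := hu 1 le_rfl one_le_two
  have hu2 := hu 2 one_le_two le_rfl
  obtain ⟨hκ1pos, M1, hW1⟩ :=
    eventual_walkIn D (Vset 1) h1 hne1 hstrong1 (hκ 1 le_rfl one_le_two) hu1
  obtain ⟨hκ2pos, M2, hW2⟩ :=
    eventual_walkIn D (Vset 2) h2 hne2 hstrong2 (hκ 2 one_le_two le_rfl) hu2
  haveI : NeZero (κ 1) := ⟨hκ1pos.ne'⟩
  haveI : NeZero (κ 2) := ⟨hκ2pos.ne'⟩
  set M := max M1 M2 with hMdef
  have hM1 : M1 ≤ M := le_max_left _ _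
  have hM2 : M2 ≤ M := le_max_right _ _
  obtain ⟨x2, hx2⟩ := hne2
  choose fib hfibS hfibu using fiber_nonempty h2 hstrong2 hu2 hx2
  obtain ⟨a0, ha0, b0, hb0, hab0⟩ := hD.linked 1 le_rfl le_rfl
  have hasWalk_one : ∀ {p q : V}, D.Adj p q → D.HasWalk 1 p q := fun {p q} h =>
    (hasWalkIn_one (S := Set.univ) trivial trivial h).hasWalk
  have key : ∀ x p q : V, x ∈ Vset 1 → p ∈ Vset 1 → q ∈ Vset 2 → D.Adj p q →
      ∀ t : ℕ, M ≤ t → (t : ZMod (κ 1)) = u 1 p - u 1 x →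
      ∀ m : ℕ, t + 1 + M ≤ m → ∀ w, w ∈ Vset 2 →
      u 2 w = u 2 q + ((m - t - 1 : ℕ) : ZMod (κ 2)) → D.HasWalk m x w := by
    intro x p q hx hp hq hpq t ht htc m hm w hw hwu
    have w1 : D.HasWalkIn (Vset 1) t x p := hW1 x hx p hp t (by omega) htc
    have w2 : D.HasWalkIn (Vset 2) (m - t - 1) q w :=
      hW2 q hq w hw (m - t - 1) (by omega) (by rw [hwu]; ring)
    have hcomb := (w1.hasWalk.trans (hasWalk_one hpq)).trans w2.hasWalk
    rwa [show t + 1 + (m - t - 1) = m by omega] at hcomb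
  have castsub : ∀ t m : ℕ, t + 1 ≤ m →
      ((m - t - 1 : ℕ) : ZMod (κ 2)) = (m : ZMod (κ 2)) - (t : ZMod (κ 2)) - 1 := by
    intro t m h
    rw [show m - t - 1 = m - (t + 1) by omega, Nat.cast_sub h]
    push_cast
    ring
  have adjcon : ∀ x p q : V, x ∈ Vset 1 → p ∈ Vset 1 → q ∈ Vset 2 → D.Adj p q →
      ∀ t : ℕ, M ≤ t → (t : ZMod (κ 1)) = u 1 p - u 1 x →
      ∀ m : ℕ, N + (t + 1 + M) ≤ m →
      G.Adj x (fib (u 2 q - 1 - (t : ZMod (κ 2)))) := by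
    intro x p q hx hp hq hpq t ht htc m hm
    set z := fib (u 2 q - 1 - (t : ZMod (κ 2))) with hzdef
    set w := fib (u 2 z + (m : ZMod (κ 2))) with hwdef
    have hxz : x ≠ z := fun h => not_mem_both hD hx (h ▸ hfibS _)
    have hxw : D.HasWalk m x w := by
      refine key x p q hx hp hq hpq t ht htc m (by omega) w (hfibS _) ?_
      rw [hwdef, hfibu, hzdef, hfibu, castsub t m (by omega)]
      ring
    have hzw : D.HasWalk m z w :=
      (hW2 z (hfibS _) w (hfibS _) m (by omega) (by rw [hwdef, hfibu]; ring)).hasWalk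
    have hadj : (D.compGraph m).Adj x z := ⟨hxz, w, hxw, hzw⟩
    rwa [hN m (by omega)] at hadj
  constructor
  · intro hcomp
    have endgame : ∀ x z1 z2 : V, z1 ∈ Vset 2 → z2 ∈ Vset 2 → z1 ≠ z2 →
        G.Adj x z1 → G.Adj x z2 → u 2 z1 = u 2 z2 := by
      intro x z1 z2 hz1 hz2 hzne hadj1 hadj2
      have hadj := hcomp z1 z2 hzne ((hadj1.symm.reachable).trans hadj2.reachable)
      rw [← hN N le_rfl] at hadj
      obtain ⟨-, w, hw1, hw2⟩ := hadj
      have l1 := level_of_walkIn hu2 (walk_in_two hD hz1 hw1)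
      have l2 := level_of_walkIn hu2 (walk_in_two hD hz2 hw2)
      exact add_right_cancel (l1.symm.trans l2)
    have hdvd : κ 2 ∣ κ 1 := by
      by_contra hnd
      set t1 := M * κ 1 with ht1
      set t2 := (M + 1) * κ 1 with ht2
      have ht1M : M ≤ t1 := Nat.le_mul_of_pos_right M hκ1pos
      have ht2M : M ≤ t2 := le_trans ht1M (Nat.mul_le_mul_right _ (by omega))
      have hc1 : (t1 : ZMod (κ 1)) = u 1 a0 - u 1 a0 := by
        rw [ht1]
        push_cast [ZMod.natCast_self]
        ring
      have hc2 : (t2 : ZMod (κ 1)) = u 1 a0 - u 1 a0 := by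
        rw [ht2]
        push_cast [ZMod.natCast_self]
        ring
      have ht12 : t1 ≤ t2 := Nat.mul_le_mul_right _ (by omega)
      set m := N + (t2 + 1 + M) with hm
      set z1 := fib (u 2 b0 - 1 - (t1 : ZMod (κ 2))) with hz1def
      set z2 := fib (u 2 b0 - 1 - (t2 : ZMod (κ 2))) with hz2def
      have hadj1 := adjcon a0 a0 b0 ha0 ha0 hb0 hab0 t1 ht1M hc1 m (by omega)
      have hadj2 := adjcon a0 a0 b0 ha0 ha0 hb0 hab0 t2 ht2M hc2 m (by omega)
      have hzu : u 2 z1 ≠ u 2 z2 := by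
        rw [hz1def, hz2def, hfibu, hfibu]
        intro h
        have h' : ((t1 : ℕ) : ZMod (κ 2)) = ((t2 : ℕ) : ZMod (κ 2)) := by
          linear_combination -h
        rw [ht1, ht2] at h'
        push_cast at h'
        have hz0 : ((κ 1 : ℕ) : ZMod (κ 2)) = 0 := by linear_combination -h'
        exact hnd ((ZMod.natCast_eq_zero_iff _ _).mp hz0)
      exact hzu (endgame a0 z1 z2 (hfibS _) (hfibS _) (fun h => hzu (by rw [h])) hadj1 hadj2)
    refine ⟨hdvd, ?_⟩
    have hred : ∀ wz : ZMod (κ 1),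
        ((wz.val : ℕ) : ZMod (κ 2)) = ZMod.castHom hdvd (ZMod (κ 2)) wz := fun wz => by
      rw [ZMod.natCast_val, ZMod.castHom_apply]
    set red := ZMod.castHom hdvd (ZMod (κ 2)) with hreddef
    have hκ1in2 : ((κ 1 : ℕ) : ZMod (κ 2)) = 0 :=
      (ZMod.natCast_eq_zero_iff _ _).mpr hdvd
    intro i j i' j' hIij hIij'
    obtain ⟨p, hp, q, hq, hpq, hup, huq⟩ := hIij
    obtain ⟨p', hp', q', hq', hpq', hup', huq'⟩ := hIij'
    by_contra hnec
    set t1 := M * κ 1 with ht1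
    set t1' := (u 1 p' - u 1 p).val + M * κ 1 with ht1'
    have ht1M : M ≤ t1 := Nat.le_mul_of_pos_right M hκ1pos
    have ht1'M : M ≤ t1' := by omega
    have hc1 : (t1 : ZMod (κ 1)) = u 1 p - u 1 p := by
      rw [ht1]
      push_cast [ZMod.natCast_self]
      ring
    have hc1' : (t1' : ZMod (κ 1)) = u 1 p' - u 1 p := by
      rw [ht1']
      push_cast [ZMod.natCast_self]
      rw [ZMod.natCast_rightInverse (u 1 p' - u 1 p)]
      ring
    set m := N + (t1' + 1 + M) + (t1 + 1 + M) with hm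
    set z1 := fib (u 2 q - 1 - (t1 : ZMod (κ 2))) with hz1def
    set z2 := fib (u 2 q' - 1 - (t1' : ZMod (κ 2))) with hz2def
    have hadj1 := adjcon p p q hp hp hq hpq t1 ht1M hc1 m (by omega)
    have hadj2 := adjcon p p' q' hp hp' hq' hpq' t1' ht1'M hc1' m (by omega)
    have ht1c : ((t1 : ℕ) : ZMod (κ 2)) = 0 := by
      rw [ht1]
      push_cast [hκ1in2]
      ring
    have ht1'c : ((t1' : ℕ) : ZMod (κ 2)) = red (u 1 p') - red (u 1 p) := by
      rw [ht1']
      push_cast [hκ1in2]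
      rw [hred (u 1 p' - u 1 p), map_sub]
      ring
    have hzu : u 2 z1 ≠ u 2 z2 := by
      rw [hz1def, hz2def, hfibu, hfibu, ht1c, ht1'c]
      intro h
      apply hnec
      rw [← hup, ← huq, ← hup', ← huq', hred (u 1 p), hred (u 1 p')]
      linear_combination -h
    exact hzu (endgame p z1 z2 (hfibS _) (hfibS _) (fun h => hzu (by rw [h])) hadj1 hadj2)
  · rintro ⟨hdvd, hconst⟩
    have hred : ∀ wz : ZMod (κ 1),
        ((wz.val : ℕ) : ZMod (κ 2)) = ZMod.castHom hdvd (ZMod (κ 2)) wz := fun wz => by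
      rw [ZMod.natCast_val, ZMod.castHom_apply]
    set red := ZMod.castHom hdvd (ZMod (κ 2)) with hreddef
    have hκ1in2 : ((κ 1 : ℕ) : ZMod (κ 2)) = 0 :=
      (ZMod.natCast_eq_zero_iff _ _).mpr hdvd
    set δ := red (u 1 a0) - u 2 b0 with hδ
    have hbase : InI D Vset u 1 (u 1 a0) (u 2 b0) := ⟨a0, ha0, b0, hb0, hab0, rfl, rfl⟩
    have hδI : ∀ (k : ZMod (κ 1)) (l : ZMod (κ 2)), InI D Vset u 1 k l → red k - l = δ := by
      intro k l hkl
      have hcc := hconst k l (u 1 a0) (u 2 b0) hkl hbase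
      rw [hred k, hred (u 1 a0)] at hcc
      exact hcc
    set φ : V → ZMod (κ 2) := fun v => if v ∈ Vset 1 then red (u 1 v) - δ else u 2 v + 1
      with hφ
    have φ1 : ∀ v, v ∈ Vset 1 → φ v = red (u 1 v) - δ := by
      intro v hv
      simp only [hφ]
      exact if_pos hv
    have φ2 : ∀ v, v ∈ Vset 2 → φ v = u 2 v + 1 := by
      intro v hv
      simp only [hφ]
      exact if_neg (fun h => not_mem_both hD h hv)
    have hwalkφ : ∀ v w', w' ∈ Vset 2 → D.HasWalk N v w' →
        φ v = u 2 w' - ((N - 1 : ℕ) : ZMod (κ 2)) := by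
      intro v w' hw' hwalk
      have hN1c : ((N - 1 : ℕ) : ZMod (κ 2)) = (N : ZMod (κ 2)) - 1 := by
        rw [Nat.cast_sub hN1]
        push_cast
        ring
      rcases mem_cases hD v with hv | hv
      · obtain ⟨t, htN, p, q, hp, hq, hpq, w1, w2⟩ := walk_from_one hD hv hw' hwalk
        have l1 : u 1 p = u 1 v + (t : ZMod (κ 1)) := level_of_walkIn hu1 w1
        have l2 : u 2 w' = u 2 q + ((N - t - 1 : ℕ) : ZMod (κ 2)) := level_of_walkIn hu2 w2
        have hIm : red (u 1 p) - u 2 q = δ := hδI _ _ ⟨p, hp, q, hq, hpq, rfl, rfl⟩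
        have hl1' : red (u 1 p) = red (u 1 v) + (t : ZMod (κ 2)) := by
          rw [l1, map_add, map_natCast]
        rw [φ1 v hv, hN1c, l2, castsub t N (by omega)]
        linear_combination hIm - hl1'
      · have l := level_of_walkIn hu2 (walk_in_two hD hv hwalk)
        rw [φ2 v hv, hN1c, l]
        ring
    have step1 : ∀ x y : V, G.Adj x y → φ x = φ y := by
      intro x y hadj
      rw [← hN N le_rfl] at hadj
      obtain ⟨hne, w, hw1, hw2⟩ := hadj
      rcases mem_cases hD w with hw | hw
      · have hx1 : x ∈ Vset 1 := by
          rcases mem_cases hD x with h | h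
          · exact h
          · exact absurd (end_mem (walk_in_two hD h hw1)) (fun hw2' => not_mem_both hD hw hw2')
        have hy1 : y ∈ Vset 1 := by
          rcases mem_cases hD y with h | h
          · exact h
          · exact absurd (end_mem (walk_in_two hD h hw2)) (fun hw2' => not_mem_both hD hw hw2')
        have lx := level_of_walkIn hu1 (walk_stay_one hD hx1 hw hw1)
        have ly := level_of_walkIn hu1 (walk_stay_one hD hy1 hw hw2)
        have huxy : u 1 x = u 1 y := add_right_cancel (lx.symm.trans ly)
        rw [φ1 x hx1, φ1 y hy1, huxy]
      · rw [hwalkφ x w hw hw1, hwalkφ y w hw hw2]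
    have step2 : ∀ x y : V, x ≠ y → φ x = φ y → G.Adj x y := by
      intro x y hxy hφeq
      have reach_lvl : ∀ v : V, ∃ m0 : ℕ, ∀ m : ℕ, m0 ≤ m → ∀ w, w ∈ Vset 2 →
          u 2 w = φ v + (m : ZMod (κ 2)) - 1 → D.HasWalk m v w := by
        intro v
        rcases mem_cases hD v with hv | hv
        · set t := (u 1 a0 - u 1 v).val + M * κ 1 with htdef
          have htM : M ≤ t := by
            have := Nat.le_mul_of_pos_right M hκ1pos
            omega
          refine ⟨t + 1 + M, fun m hm w hw hwu => ?_⟩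
          refine key v a0 b0 hv ha0 hb0 hab0 t htM ?_ m hm w hw ?_
          · rw [htdef]
            push_cast [ZMod.natCast_self]
            rw [ZMod.natCast_rightInverse (u 1 a0 - u 1 v)]
            ring
          · have htc : ((t : ℕ) : ZMod (κ 2)) = red (u 1 a0) - red (u 1 v) := by
              rw [htdef]
              push_cast [hκ1in2]
              rw [hred (u 1 a0 - u 1 v), map_sub]
              ring
            rw [hwu, φ1 v hv, castsub t m (by omega), htc, hδ]
            ring
        · refine ⟨M, fun m hm w hw hwu => ?_⟩
          refine (hW2 v hv w hw m (by omega) ?_).hasWalk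
          rw [hwu, φ2 v hv]
          ring
      obtain ⟨mx, hmx⟩ := reach_lvl x
      obtain ⟨my, hmy⟩ := reach_lvl y
      set m := N + mx + my with hm
      set w := fib (φ x + (m : ZMod (κ 2)) - 1) with hwdef
      have hadj : (D.compGraph m).Adj x y :=
        ⟨hxy, w, hmx m (by omega) w (hfibS _) (hfibu _),
          hmy m (by omega) w (hfibS _) (by rw [hwdef, hfibu, hφeq])⟩
      rwa [hN m (by omega)] at hadj
    intro x y hxy hreach
    have hφconst : ∀ {a b : V}, G.Walk a b → φ a = φ b := by
      intro a b wk
      induction wk with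
      | nil => rfl
      | cons h p ih => exact (step1 _ _ h).trans ih
    obtain ⟨wk⟩ := hreach
    exact step2 x y hxy (hφconst wk)
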